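/- Let 0 < Lint < Lext and 0 < b < Lext be real numbers, and set Φ(β) := Lext + b·cos β. Let H : ℝ → ℝ and F : ℝ × ℝ → ℝ be twice continuously differentiable on an open set containing (Lint, Lext] and (Lint, Lext] × ℝ respectively, with H > 0 and F > 0 there. Suppose F(Lext, β) = Φ(β)² for all β, H(Lext) = 1, ∂ℓF(Lext, β) = ∂ℓ²F(Lext, β) = 0 for all β, and moreover H'(Lext) = H''(Lext) = 0. Then there exists δ > 0 such that Z_1(ℓ,β) < 0 for all (ℓ,β) ∈ (Lext−δ, Lext) × (π−δ, π+δ); that is, the null energy condition is violated in an open set sufficiently close to ℓ = Lext and β = π. -/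

import Mathlib

open Real Filter Set
open Topology

/-- First partial derivative of `F` with respect to its first argument `ℓ`. -/
noncomputable def pdl (F : ℝ × ℝ → ℝ) (l β : ℝ) : ℝ := deriv (fun x => F (x, β)) l

/-- Second partial derivative of `F` with respect to its first argument `ℓ`. -/
noncomputable def pdll (F : ℝ × ℝ → ℝ) (l β : ℝ) : ℝ := deriv (fun x => pdl F x β) l

/-- First partial derivative of `F` with respect to its second argument `β`. -/
noncomputable def pdb (F : ℝ × ℝ → ℝ) (l β : ℝ) : ℝ := deriv (fun y => F (l, y)) β

/-- Second partial derivative of `F` with respect to its second argument `β`. -/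
noncomputable def pdbb (F : ℝ × ℝ → ℝ) (l β : ℝ) : ℝ := deriv (fun y => pdb F l y) β

/-- The scalar `Z_ϑ = G_{ab} (A_ϑ)^a (A_ϑ)^b` for the metric
`ds² = −H dτ² + dℓ² + F dα² + b² dβ²` and `A_ϑ = H^{−1/2} ∂_τ + ϑ b^{−1} ∂_β`. -/
noncomputable def Zscalar (b : ℝ) (H : ℝ → ℝ) (F : ℝ × ℝ → ℝ) (ϑ l β : ℝ) : ℝ :=
  (1 / (4 * b ^ 2)) * ((pdb F l β / F (l, β)) ^ 2 - 2 * pdbb F l β / F (l, β))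
  + ((1 - ϑ ^ 2) / 4) * ((pdl F l β / F (l, β)) ^ 2 - 2 * pdll F l β / F (l, β))
  + (ϑ ^ 2 / 4) * (2 * deriv (deriv H) l / H l - (deriv H l / H l) ^ 2
      + (deriv H l / H l) * (pdl F l β / F (l, β)))

lemma pdl_eq_fderiv {F : ℝ × ℝ → ℝ} {p : ℝ × ℝ} (h : DifferentiableAt ℝ F p) :
    pdl F p.1 p.2 = fderiv ℝ F p ((1 : ℝ), (0 : ℝ)) := by
  have hF : HasFDerivAt F (fderiv ℝ F p) (p.1, p.2) := by
    rw [Prod.mk.eta]; exact h.hasFDerivAt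
  have h1 : HasDerivAt (fun x : ℝ => (x, p.2)) (((1 : ℝ), (0 : ℝ))) p.1 :=
    (hasDerivAt_id p.1).prodMk (hasDerivAt_const p.1 p.2)
  exact (hF.comp_hasDerivAt p.1 h1).deriv

lemma pdb_eq_fderiv {F : ℝ × ℝ → ℝ} {p : ℝ × ℝ} (h : DifferentiableAt ℝ F p) :
    pdb F p.1 p.2 = fderiv ℝ F p ((0 : ℝ), (1 : ℝ)) := by
  have hF : HasFDerivAt F (fderiv ℝ F p) (p.1, p.2) := by
    rw [Prod.mk.eta]; exact h.hasFDerivAt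
  have h1 : HasDerivAt (fun y : ℝ => (p.1, y)) (((0 : ℝ), (1 : ℝ))) p.2 :=
    (hasDerivAt_const p.2 p.1).prodMk (hasDerivAt_id p.2)
  exact (hF.comp_hasDerivAt p.2 h1).deriv

lemma pdll_eq_fderiv {F : ℝ × ℝ → ℝ} {V : Set (ℝ × ℝ)} (hV : IsOpen V)
    (hF : ContDiffOn ℝ 2 F V) {p : ℝ × ℝ} (hp : p ∈ V) :
    pdll F p.1 p.2 = fderiv ℝ (fderiv ℝ F) p ((1 : ℝ), (0 : ℝ)) ((1 : ℝ), (0 : ℝ)) := by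
  have hG : ContDiffOn ℝ 1 (fderiv ℝ F) V := hF.fderiv_of_isOpen hV (by norm_num)
  have hp' : (p.1, p.2) ∈ V := by rw [Prod.mk.eta]; exact hp
  have hmem : {x : ℝ | (x, p.2) ∈ V} ∈ 𝓝 p.1 := by
    have hc : ContinuousAt (fun x : ℝ => (x, p.2)) p.1 := by fun_prop
    exact hc (hV.mem_nhds hp')
  have hev : (fun x => pdl F x p.2) =ᶠ[𝓝 p.1]
      (fun x => fderiv ℝ F (x, p.2) ((1 : ℝ), (0 : ℝ))) := by
    filter_upwards [hmem] with x hx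
    exact pdl_eq_fderiv ((hF.contDiffAt (hV.mem_nhds hx)).differentiableAt (by norm_num))
  have hGd : DifferentiableAt ℝ (fderiv ℝ F) p :=
    (hG.contDiffAt (hV.mem_nhds hp)).differentiableAt (by norm_num)
  have hGF : HasFDerivAt (fderiv ℝ F) (fderiv ℝ (fderiv ℝ F) p) (p.1, p.2) := by
    rw [Prod.mk.eta]; exact hGd.hasFDerivAt
  have h1 : HasDerivAt (fun x : ℝ => fderiv ℝ F (x, p.2))
      (fderiv ℝ (fderiv ℝ F) p ((1 : ℝ), (0 : ℝ))) p.1 :=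
    hGF.comp_hasDerivAt p.1 ((hasDerivAt_id p.1).prodMk (hasDerivAt_const p.1 p.2))
  have h2 : HasDerivAt (fun x : ℝ => fderiv ℝ F (x, p.2) ((1 : ℝ), (0 : ℝ)))
      (fderiv ℝ (fderiv ℝ F) p ((1 : ℝ), (0 : ℝ)) ((1 : ℝ), (0 : ℝ))) p.1 := by
    simpa using h1.clm_apply (hasDerivAt_const p.1 (((1 : ℝ), (0 : ℝ))))
  calc pdll F p.1 p.2
      = deriv (fun x => fderiv ℝ F (x, p.2) ((1 : ℝ), (0 : ℝ))) p.1 := hev.deriv_eq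
    _ = _ := h2.deriv

lemma pdbb_eq_fderiv {F : ℝ × ℝ → ℝ} {V : Set (ℝ × ℝ)} (hV : IsOpen V)
    (hF : ContDiffOn ℝ 2 F V) {p : ℝ × ℝ} (hp : p ∈ V) :
    pdbb F p.1 p.2 = fderiv ℝ (fderiv ℝ F) p ((0 : ℝ), (1 : ℝ)) ((0 : ℝ), (1 : ℝ)) := by
  have hG : ContDiffOn ℝ 1 (fderiv ℝ F) V := hF.fderiv_of_isOpen hV (by norm_num)
  have hp' : (p.1, p.2) ∈ V := by rw [Prod.mk.eta]; exact hp
  have hmem : {y : ℝ | (p.1, y) ∈ V} ∈ 𝓝 p.2 := by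
    have hc : ContinuousAt (fun y : ℝ => (p.1, y)) p.2 := by fun_prop
    exact hc (hV.mem_nhds hp')
  have hev : (fun y => pdb F p.1 y) =ᶠ[𝓝 p.2]
      (fun y => fderiv ℝ F (p.1, y) ((0 : ℝ), (1 : ℝ))) := by
    filter_upwards [hmem] with y hy
    exact pdb_eq_fderiv ((hF.contDiffAt (hV.mem_nhds hy)).differentiableAt (by norm_num))
  have hGd : DifferentiableAt ℝ (fderiv ℝ F) p :=
    (hG.contDiffAt (hV.mem_nhds hp)).differentiableAt (by norm_num)
  have hGF : HasFDerivAt (fderiv ℝ F) (fderiv ℝ (fderiv ℝ F) p) (p.1, p.2) := by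
    rw [Prod.mk.eta]; exact hGd.hasFDerivAt
  have h1 : HasDerivAt (fun y : ℝ => fderiv ℝ F (p.1, y))
      (fderiv ℝ (fderiv ℝ F) p ((0 : ℝ), (1 : ℝ))) p.2 :=
    hGF.comp_hasDerivAt p.2 ((hasDerivAt_const p.2 p.1).prodMk (hasDerivAt_id p.2))
  have h2 : HasDerivAt (fun y : ℝ => fderiv ℝ F (p.1, y) ((0 : ℝ), (1 : ℝ)))
      (fderiv ℝ (fderiv ℝ F) p ((0 : ℝ), (1 : ℝ)) ((0 : ℝ), (1 : ℝ))) p.2 := by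
    simpa using h1.clm_apply (hasDerivAt_const p.2 (((0 : ℝ), (1 : ℝ))))
  calc pdbb F p.1 p.2
      = deriv (fun y => fderiv ℝ F (p.1, y) ((0 : ℝ), (1 : ℝ))) p.2 := hev.deriv_eq
    _ = _ := h2.deriv

set_option maxHeartbeats 1600000 in
/-- Part (ii) of Theorem 1 of the paper: if moreover `H'(Lext) = H''(Lext) = 0`, then `Z_1 < 0`
(violation of the null energy condition) in an open set close to `ℓ = Lext` and `β = π`. -/
theorem NEC_violated_near_external_boundary
    (Lint Lext b : ℝ) (hLint : 0 < Lint) (hLL : Lint < Lext) (hb : 0 < b) (hbL : b < Lext)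
    (H : ℝ → ℝ) (F : ℝ × ℝ → ℝ)
    (U : Set ℝ) (hUopen : IsOpen U) (hUsub : Set.Ioc Lint Lext ⊆ U)
    (V : Set (ℝ × ℝ)) (hVopen : IsOpen V)
    (hVsub : Set.Ioc Lint Lext ×ˢ (Set.univ : Set ℝ) ⊆ V)
    (hH : ContDiffOn ℝ 2 H U) (hF : ContDiffOn ℝ 2 F V)
    (hHpos : ∀ x ∈ U, 0 < H x) (hFpos : ∀ p ∈ V, 0 < F p)
    (hFext : ∀ β : ℝ, F (Lext, β) = (Lext + b * Real.cos β) ^ 2)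
    (hHext : H Lext = 1)
    (hdl : ∀ β : ℝ, pdl F Lext β = 0) (hdll : ∀ β : ℝ, pdll F Lext β = 0)
    (hH1 : deriv H Lext = 0) (hH2 : deriv (deriv H) Lext = 0) :
    ∃ δ > 0, ∀ l β : ℝ, l ∈ Set.Ioo (Lext - δ) Lext → β ∈ Set.Ioo (Real.pi - δ) (Real.pi + δ) →
      Zscalar b H F 1 l β < 0 := by
  set q₀ : ℝ × ℝ := (Lext, Real.pi) with hq₀
  have hLmem : Lext ∈ Set.Ioc Lint Lext := ⟨hLL, le_rfl⟩
  have hq₀V : q₀ ∈ V := hVsub ⟨hLmem, trivial⟩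
  have hLU : Lext ∈ U := hUsub hLmem
  have hLb : 0 < Lext - b := by linarith
  -- value computations at the point
  have hfun : (fun y => F (Lext, y)) = fun y => (Lext + b * Real.cos y) ^ 2 := funext hFext
  have hpdb_all : ∀ y : ℝ, pdb F Lext y
      = 2 * (Lext + b * Real.cos y) * (b * (-Real.sin y)) := by
    intro y
    have h1 : HasDerivAt (fun y => Lext + b * Real.cos y) (b * (-Real.sin y)) y :=
      ((Real.hasDerivAt_cos y).const_mul b).const_add Lext
    have h2 : HasDerivAt (fun y => (Lext + b * Real.cos y) ^ 2)
        (2 * (Lext + b * Real.cos y) * (b * (-Real.sin y))) y := by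
      simpa [pow_one] using h1.fun_pow 2
    unfold pdb
    rw [hfun]
    exact h2.deriv
  have hpdbPi : pdb F Lext Real.pi = 0 := by simp [hpdb_all]
  have hpdbbPi : pdbb F Lext Real.pi = 2 * (Lext - b) * b := by
    have hf : HasDerivAt (fun y => 2 * (Lext + b * Real.cos y))
        (2 * (b * (-Real.sin Real.pi))) Real.pi :=
      (((Real.hasDerivAt_cos Real.pi).const_mul b).const_add Lext).const_mul 2
    have hg : HasDerivAt (fun y => b * (-Real.sin y)) (b * (-Real.cos Real.pi)) Real.pi :=
      (Real.hasDerivAt_sin Real.pi).neg.const_mul b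
    have hmul := hf.mul hg
    have : pdbb F Lext Real.pi = 2 * (b * -Real.sin Real.pi) * (b * -Real.sin Real.pi)
        + 2 * (Lext + b * Real.cos Real.pi) * (b * -Real.cos Real.pi) := by
      unfold pdbb
      rw [funext hpdb_all]
      exact hmul.deriv
    rw [this, Real.sin_pi, Real.cos_pi]
    ring
  have hFpi : F (Lext, Real.pi) = (Lext - b) ^ 2 := by
    rw [hFext]; simp [Real.cos_pi]; ring
  have hFne : F (Lext, Real.pi) ≠ 0 := by rw [hFpi]; positivity
  have hHne : H Lext ≠ 0 := by rw [hHext]; norm_num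
  have hneg : Zscalar b H F 1 Lext Real.pi < 0 := by
    unfold Zscalar
    rw [hpdbPi, hpdbbPi, hdl, hdll, hH1, hH2, hFpi]
    simp only [one_pow, sub_self, zero_div, zero_pow, mul_zero, zero_mul, zero_sub,
      zero_add, add_zero, sub_zero, zero_sub, neg_zero, ne_eq]
    have h1 : 0 < 1 / (4 * b ^ 2) := by positivity
    have h2 : 0 < 2 * (2 * (Lext - b) * b) / (Lext - b) ^ 2 := by positivity
    nlinarith [mul_pos h1 h2]
  -- continuity of each ingredient at q₀
  have hG : ContDiffOn ℝ 1 (fderiv ℝ F) V := hF.fderiv_of_isOpen hVopen (by norm_num)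
  have hGc : ContinuousOn (fderiv ℝ F) V :=
    hF.continuousOn_fderiv_of_isOpen hVopen (by norm_num)
  have hG2c : ContinuousOn (fderiv ℝ (fderiv ℝ F)) V :=
    hG.continuousOn_fderiv_of_isOpen hVopen le_rfl
  have hGcAt : ContinuousAt (fderiv ℝ F) q₀ := hGc.continuousAt (hVopen.mem_nhds hq₀V)
  have hG2cAt : ContinuousAt (fderiv ℝ (fderiv ℝ F)) q₀ :=
    hG2c.continuousAt (hVopen.mem_nhds hq₀V)
  have hVn : V ∈ 𝓝 q₀ := hVopen.mem_nhds hq₀V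
  have cpdl : ContinuousAt (fun p : ℝ × ℝ => pdl F p.1 p.2) q₀ := by
    have c1 : ContinuousAt (fun p : ℝ × ℝ => fderiv ℝ F p ((1 : ℝ), (0 : ℝ))) q₀ :=
      ((ContinuousLinearMap.apply ℝ ℝ (((1 : ℝ), (0 : ℝ)))).continuous.continuousAt).comp hGcAt
    refine c1.congr ?_
    filter_upwards [hVn] with p hp
    exact (pdl_eq_fderiv
      ((hF.contDiffAt (hVopen.mem_nhds hp)).differentiableAt (by norm_num))).symm
  have cpdb : ContinuousAt (fun p : ℝ × ℝ => pdb F p.1 p.2) q₀ := by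
    have c1 : ContinuousAt (fun p : ℝ × ℝ => fderiv ℝ F p ((0 : ℝ), (1 : ℝ))) q₀ :=
      ((ContinuousLinearMap.apply ℝ ℝ (((0 : ℝ), (1 : ℝ)))).continuous.continuousAt).comp hGcAt
    refine c1.congr ?_
    filter_upwards [hVn] with p hp
    exact (pdb_eq_fderiv
      ((hF.contDiffAt (hVopen.mem_nhds hp)).differentiableAt (by norm_num))).symm
  have cpdll : ContinuousAt (fun p : ℝ × ℝ => pdll F p.1 p.2) q₀ := by
    have c1 : ContinuousAt
        (fun p : ℝ × ℝ => fderiv ℝ (fderiv ℝ F) p ((1 : ℝ), (0 : ℝ)) ((1 : ℝ), (0 : ℝ))) q₀ :=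
      ((ContinuousLinearMap.apply ℝ ℝ (((1 : ℝ), (0 : ℝ)))).continuous.continuousAt).comp
        (((ContinuousLinearMap.apply ℝ ((ℝ × ℝ) →L[ℝ] ℝ)
          (((1 : ℝ), (0 : ℝ)))).continuous.continuousAt).comp hG2cAt)
    refine c1.congr ?_
    filter_upwards [hVn] with p hp
    exact (pdll_eq_fderiv hVopen hF hp).symm
  have cpdbb : ContinuousAt (fun p : ℝ × ℝ => pdbb F p.1 p.2) q₀ := by
    have c1 : ContinuousAt
        (fun p : ℝ × ℝ => fderiv ℝ (fderiv ℝ F) p ((0 : ℝ), (1 : ℝ)) ((0 : ℝ), (1 : ℝ))) q₀ :=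
      ((ContinuousLinearMap.apply ℝ ℝ (((0 : ℝ), (1 : ℝ)))).continuous.continuousAt).comp
        (((ContinuousLinearMap.apply ℝ ((ℝ × ℝ) →L[ℝ] ℝ)
          (((0 : ℝ), (1 : ℝ)))).continuous.continuousAt).comp hG2cAt)
    refine c1.congr ?_
    filter_upwards [hVn] with p hp
    exact (pdbb_eq_fderiv hVopen hF hp).symm
  have cF : ContinuousAt (fun p : ℝ × ℝ => F (p.1, p.2)) q₀ := by
    have := hF.continuousOn.continuousAt hVn
    simpa using this
  have hH' : ContDiffOn ℝ 1 (deriv H) U := hH.deriv_of_isOpen hUopen (by norm_num)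
  have hUn : U ∈ 𝓝 Lext := hUopen.mem_nhds hLU
  have cHp : ContinuousAt (fun p : ℝ × ℝ => H p.1) q₀ :=
    (hH.continuousOn.continuousAt hUn).comp continuousAt_fst
  have cdHp : ContinuousAt (fun p : ℝ × ℝ => deriv H p.1) q₀ :=
    ContinuousAt.comp (g := deriv H) (hH'.continuousOn.continuousAt hUn) continuousAt_fst
  have cddHp : ContinuousAt (fun p : ℝ × ℝ => deriv (deriv H) p.1) q₀ :=
    ContinuousAt.comp (g := deriv (deriv H))
      ((hH'.continuousOn_deriv_of_isOpen hUopen le_rfl).continuousAt hUn) continuousAt_fst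
  have hc : ContinuousAt (fun p : ℝ × ℝ => Zscalar b H F 1 p.1 p.2) q₀ := by
    unfold Zscalar
    exact ((continuousAt_const.mul (((cpdb.div cF hFne).pow 2).sub
        ((continuousAt_const.mul cpdbb).div cF hFne))).add
      (continuousAt_const.mul (((cpdl.div cF hFne).pow 2).sub
        ((continuousAt_const.mul cpdll).div cF hFne)))).add
      (continuousAt_const.mul ((((continuousAt_const.mul cddHp).div cHp hHne).sub
        ((cdHp.div cHp hHne).pow 2)).add
        ((cdHp.div cHp hHne).mul (cpdl.div cF hFne))))
  have hev : (fun p : ℝ × ℝ => Zscalar b H F 1 p.1 p.2) ⁻¹' Set.Iio 0 ∈ 𝓝 q₀ :=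
    hc (Iio_mem_nhds hneg)
  obtain ⟨ε, hε, hball⟩ := Metric.mem_nhds_iff.mp hev
  refine ⟨ε, hε, fun l β hl hβ => ?_⟩
  have hdist : dist ((l, β) : ℝ × ℝ) q₀ < ε := by
    rw [hq₀, Prod.dist_eq]
    apply max_lt
    · rw [Real.dist_eq, abs_lt]
      exact ⟨by linarith [hl.1], by linarith [hl.2]⟩
    · rw [Real.dist_eq, abs_lt]
      exact ⟨by linarith [hβ.1], by linarith [hβ.2]⟩
  exact hball hdist
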